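/- In the pf-sLDA single-document setup, suppose each a_n : Δ → ℝ is continuous with a_n(θ) > 0 for all θ ∈ Δ, each b_n > 0, and r : (Fin N → Bool) → ℝ satisfies r(ξ) > 0 for all ξ. Then the joint log likelihood satisfies the lower bound log(∑_ξ q(ξ) · r(ξ) · L₀(ξ)) ≥ ∑_ξ q(ξ) · log r(ξ) + p · ∑_n ∫_Δ log a_n(θ) dμ(θ) + (1−p) · ∑_n log b_n. -/

import Mathlib

open MeasureTheory

/-- Sum over boolean configurations of a product factorizes. -/
lemma pfslda_sum_prod_bool {N : ℕ} (w : Fin N → Bool → ℝ) :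
    ∑ ξ : Fin N → Bool, ∏ n, w n (ξ n) = ∏ n, (w n true + w n false) := by
  rw [← Fintype.prod_sum]
  simp

/-- Marginalization of a single coordinate under the product measure on switches. -/
lemma pfslda_marginal {N : ℕ} (p : ℝ) (h : Bool → ℝ) (n0 : Fin N) :
    ∑ ξ : Fin N → Bool, (∏ n, (if ξ n then p else 1 - p)) * h (ξ n0)
      = p * h true + (1 - p) * h false := by
  have key : ∀ ξ : Fin N → Bool,
      (∏ n, (if ξ n then p else 1 - p)) * h (ξ n0)
        = ∏ n, ((if ξ n then p else 1 - p) * (if n = n0 then h (ξ n) else 1)) := by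
    intro ξ
    rw [Finset.prod_mul_distrib]
    congr 1
    simp [Finset.prod_ite_eq']
  calc ∑ ξ : Fin N → Bool, (∏ n, (if ξ n then p else 1 - p)) * h (ξ n0)
      = ∑ ξ : Fin N → Bool,
          ∏ n, ((if ξ n then p else 1 - p) * (if n = n0 then h (ξ n) else 1)) :=
        Finset.sum_congr rfl fun ξ _ => key ξ
    _ = ∏ n, ((p * (if n = n0 then h true else 1)) +
          ((1 - p) * (if n = n0 then h false else 1))) := by
        rw [pfslda_sum_prod_bool (fun n c =>
          (if c then p else 1 - p) * (if n = n0 then h c else 1))]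
        norm_num
    _ = p * h true + (1 - p) * h false := by
        rw [Fintype.prod_eq_single n0 (fun c hc => by simp [hc])]
        norm_num

/-- Finite Jensen inequality for the logarithm. -/
lemma pfslda_finite_jensen {ι : Type*} [Fintype ι] (w x : ι → ℝ)
    (hw : ∀ i, 0 < w i) (hw1 : ∑ i, w i = 1) (hx : ∀ i, 0 < x i) :
    ∑ i, w i * Real.log (x i) ≤ Real.log (∑ i, w i * x i) := by
  have hne : (Finset.univ : Finset ι).Nonempty := by
    rcases (Finset.univ : Finset ι).eq_empty_or_nonempty with h | h
    · exfalso; rw [h] at hw1; simp at hw1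
    · exact h
  set S : ℝ := ∑ i, w i * x i with hS
  have hSpos : 0 < S :=
    Finset.sum_pos (fun i _ => mul_pos (hw i) (hx i)) hne
  have hterm : ∀ i, w i * Real.log (x i) ≤ w i * x i / S + w i * (Real.log S - 1) := by
    intro i
    have h1 : Real.log (x i / S) ≤ x i / S - 1 :=
      Real.log_le_sub_one_of_pos (div_pos (hx i) hSpos)
    rw [Real.log_div (hx i).ne' hSpos.ne'] at h1
    have h2 : Real.log (x i) ≤ x i / S - 1 + Real.log S := by linarith
    have := mul_le_mul_of_nonneg_left h2 (hw i).le
    calc w i * Real.log (x i) ≤ w i * (x i / S - 1 + Real.log S) := this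
      _ = w i * x i / S + w i * (Real.log S - 1) := by ring
  calc ∑ i, w i * Real.log (x i)
      ≤ ∑ i, (w i * x i / S + w i * (Real.log S - 1)) :=
        Finset.sum_le_sum fun i _ => hterm i
    _ = (∑ i, w i * x i) / S + (∑ i, w i) * (Real.log S - 1) := by
        rw [Finset.sum_add_distrib, Finset.sum_div, Finset.sum_mul]
    _ = Real.log S := by
        rw [hw1, ← hS, div_self hSpos.ne']; ring

/-- Jensen's inequality for the logarithm and an integral, elementary form. -/
lemma pfslda_integral_jensen {X : Type*} [MeasurableSpace X]
    (μ : Measure X) [IsProbabilityMeasure μ] (g : X → ℝ)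
    (hg : Integrable g μ) (hlg : Integrable (fun x => Real.log (g x)) μ)
    (hgpos : ∀ x, 0 < g x) (hC : 0 < ∫ x, g x ∂μ) :
    ∫ x, Real.log (g x) ∂μ ≤ Real.log (∫ x, g x ∂μ) := by
  set C : ℝ := ∫ x, g x ∂μ with hCdef
  have hpt : ∀ x, Real.log (g x) ≤ g x / C + (Real.log C - 1) := by
    intro x
    have h1 : Real.log (g x / C) ≤ g x / C - 1 :=
      Real.log_le_sub_one_of_pos (div_pos (hgpos x) hC)
    rw [Real.log_div (hgpos x).ne' hC.ne'] at h1
    linarith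
  have hint : Integrable (fun x => g x / C + (Real.log C - 1)) μ :=
    (hg.div_const C).add (integrable_const _)
  calc ∫ x, Real.log (g x) ∂μ
      ≤ ∫ x, (g x / C + (Real.log C - 1)) ∂μ :=
        integral_mono hlg hint fun x => hpt x
    _ = C / C + (Real.log C - 1) := by
        rw [integral_add (hg.div_const C) (integrable_const _), integral_div,
          integral_const, probReal_univ, smul_eq_mul, one_mul]
    _ = Real.log C := by rw [div_self hC.ne']; ring

/-- Equation (1) of the pf-sLDA paper: the joint log likelihood
`log p(y, w) = log ∑_ξ q(ξ) r(ξ) L₀(ξ)` is lower-bounded by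
`E_ξ[log p(y|w,ξ)] + p · E_θ[log p_β(w|θ)] + (1-p) · log p_π(w)`. -/
theorem pfslda_log_likelihood_lower_bound
    (K N : ℕ)
    (μ : Measure (stdSimplex ℝ (Fin K))) [IsProbabilityMeasure μ]
    (p : ℝ) (hp : p ∈ Set.Ioo (0 : ℝ) 1)
    (a : Fin N → stdSimplex ℝ (Fin K) → ℝ)
    (ha_cont : ∀ n, Continuous (a n))
    (ha_pos : ∀ n θ, 0 < a n θ)
    (b : Fin N → ℝ) (hb : ∀ n, 0 < b n)
    (r : (Fin N → Bool) → ℝ) (hr : ∀ ξ, 0 < r ξ)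
    (q : (Fin N → Bool) → ℝ)
    (hq : ∀ ξ, q ξ = ∏ n, (if ξ n then p else 1 - p))
    (L₀ : (Fin N → Bool) → ℝ)
    (hL₀ : ∀ ξ, L₀ ξ = ∫ θ, ∏ n, (if ξ n then a n θ else b n) ∂μ) :
    Real.log (∑ ξ : Fin N → Bool, q ξ * r ξ * L₀ ξ) ≥
      (∑ ξ : Fin N → Bool, q ξ * Real.log (r ξ)) +
        p * ∑ n, ∫ θ, Real.log (a n θ) ∂μ +
        (1 - p) * ∑ n, Real.log (b n) := by
  obtain ⟨hp0, hp1⟩ := hp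
  have hp1' : 0 < 1 - p := by linarith
  -- integrability helper
  have hcont_int : ∀ f : stdSimplex ℝ (Fin K) → ℝ, Continuous f → Integrable f μ :=
    fun f hf => hf.integrable_of_hasCompactSupport (isClosed_tsupport f).isCompact
  -- positivity of q
  have hqpos : ∀ ξ, 0 < q ξ := by
    intro ξ
    rw [hq ξ]
    exact Finset.prod_pos fun n _ => by split <;> assumption
  -- q sums to 1
  have hqsum : ∑ ξ : Fin N → Bool, q ξ = 1 := by
    have := pfslda_sum_prod_bool (fun (_ : Fin N) c => if c then p else 1 - p)
    simp only [if_true, if_false] at this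
    calc ∑ ξ : Fin N → Bool, q ξ
        = ∑ ξ : Fin N → Bool, ∏ n, (if ξ n then p else 1 - p) :=
          Finset.sum_congr rfl fun ξ _ => hq ξ
      _ = ∏ _n : Fin N, (p + (1 - p)) := this
      _ = 1 := by simp
  -- the integrand for fixed ξ
  set g : (Fin N → Bool) → stdSimplex ℝ (Fin K) → ℝ :=
    fun ξ θ => ∏ n, (if ξ n then a n θ else b n) with hgdef
  have hgcont : ∀ ξ, Continuous (g ξ) := by
    intro ξ
    apply continuous_finset_prod
    intro n _
    by_cases h : ξ n <;> simp [h, ha_cont n, continuous_const]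
  have hgpos : ∀ ξ θ, 0 < g ξ θ := by
    intro ξ θ
    apply Finset.prod_pos
    intro n _
    by_cases h : ξ n <;> simp [h, ha_pos n θ, hb n]
  have hgint : ∀ ξ, Integrable (g ξ) μ := fun ξ => hcont_int _ (hgcont ξ)
  -- the space is nonempty (probability measure)
  have hnonempty : Nonempty (stdSimplex ℝ (Fin K)) := by
    by_contra h
    have : (Set.univ : Set (stdSimplex ℝ (Fin K))) = ∅ :=
      Set.univ_eq_empty_iff.mpr (not_nonempty_iff.mp h)
    have h1 : μ Set.univ = 1 := measure_univ
    rw [this] at h1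
    simp at h1
  -- positivity of L₀
  have hL₀pos : ∀ ξ, 0 < L₀ ξ := by
    intro ξ
    rw [hL₀ ξ]
    obtain ⟨θ₀, -, hθ₀⟩ := (isCompact_univ).exists_isMinOn Set.univ_nonempty
      (hgcont ξ).continuousOn
    have hlb : ∀ θ, g ξ θ₀ ≤ g ξ θ := fun θ => hθ₀ (Set.mem_univ θ)
    have : (g ξ θ₀ : ℝ) = ∫ _θ, g ξ θ₀ ∂μ := by
      rw [integral_const, probReal_univ, one_smul]
    calc (0 : ℝ) < g ξ θ₀ := hgpos ξ θ₀
      _ = ∫ _θ, g ξ θ₀ ∂μ := this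
      _ ≤ ∫ θ, g ξ θ ∂μ := integral_mono (integrable_const _) (hgint ξ) hlb
  -- log of the integrand is continuous and integrable
  have hlogg_cont : ∀ ξ, Continuous fun θ => Real.log (g ξ θ) := by
    intro ξ
    exact (hgcont ξ).log fun θ => (hgpos ξ θ).ne'
  have hloga_int : ∀ n, Integrable (fun θ => Real.log (a n θ)) μ := by
    intro n
    exact hcont_int _ ((ha_cont n).log fun θ => (ha_pos n θ).ne')
  -- lower bound for log L₀ ξ
  have hlogL₀ : ∀ ξ, ∑ n, (if ξ n then ∫ θ, Real.log (a n θ) ∂μ else Real.log (b n))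
      ≤ Real.log (L₀ ξ) := by
    intro ξ
    have hint_each : ∀ n : Fin N,
        Integrable (fun θ => if ξ n then Real.log (a n θ) else Real.log (b n)) μ := by
      intro n
      by_cases h : ξ n <;> simp [h, hloga_int n, integrable_const]
    have hsum_int : ∫ θ, Real.log (g ξ θ) ∂μ
        = ∑ n, (if ξ n then ∫ θ, Real.log (a n θ) ∂μ else Real.log (b n)) := by
      have hpt : ∀ θ, Real.log (g ξ θ)
          = ∑ n, (if ξ n then Real.log (a n θ) else Real.log (b n)) := by
        intro θ
        rw [hgdef]
        rw [Real.log_prod (fun n _ => by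
          split
          · exact (ha_pos n θ).ne'
          · exact (hb n).ne')]
        exact Finset.sum_congr rfl fun n _ => by split <;> rfl
      calc ∫ θ, Real.log (g ξ θ) ∂μ
          = ∫ θ, ∑ n, (if ξ n then Real.log (a n θ) else Real.log (b n)) ∂μ := by
            exact integral_congr_ae (Filter.Eventually.of_forall hpt)
        _ = ∑ n, ∫ θ, (if ξ n then Real.log (a n θ) else Real.log (b n)) ∂μ :=
            integral_finset_sum _ fun n _ => hint_each n
        _ = ∑ n, (if ξ n then ∫ θ, Real.log (a n θ) ∂μ else Real.log (b n)) := by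
            refine Finset.sum_congr rfl fun n _ => ?_
            by_cases h : ξ n
            · simp [h]
            · simp [h, integral_const, measure_univ]
    have hjensen : ∫ θ, Real.log (g ξ θ) ∂μ ≤ Real.log (∫ θ, g ξ θ ∂μ) := by
      apply pfslda_integral_jensen μ (g ξ) (hgint ξ)
        (hcont_int _ (hlogg_cont ξ)) (hgpos ξ)
      · have := hL₀pos ξ; rwa [hL₀ ξ] at this
    rw [hL₀ ξ]
    rw [← hsum_int]
    exact hjensen
  -- finite Jensen step
  have hstep1 : ∑ ξ : Fin N → Bool, q ξ * Real.log (r ξ * L₀ ξ)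
      ≤ Real.log (∑ ξ : Fin N → Bool, q ξ * (r ξ * L₀ ξ)) :=
    pfslda_finite_jensen q (fun ξ => r ξ * L₀ ξ) hqpos hqsum
      (fun ξ => mul_pos (hr ξ) (hL₀pos ξ))
  have hsum_eq : ∑ ξ : Fin N → Bool, q ξ * (r ξ * L₀ ξ)
      = ∑ ξ : Fin N → Bool, q ξ * r ξ * L₀ ξ := by
    exact Finset.sum_congr rfl fun ξ _ => by ring
  -- split the log of products
  have hsplit : ∀ ξ : Fin N → Bool, q ξ * Real.log (r ξ * L₀ ξ)
      = q ξ * Real.log (r ξ) + q ξ * Real.log (L₀ ξ) := by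
    intro ξ
    rw [Real.log_mul (hr ξ).ne' (hL₀pos ξ).ne']
    ring
  -- lower bound involving log L₀
  have hstep2 : ∑ ξ : Fin N → Bool,
      q ξ * ∑ n, (if ξ n then ∫ θ, Real.log (a n θ) ∂μ else Real.log (b n))
      ≤ ∑ ξ : Fin N → Bool, q ξ * Real.log (L₀ ξ) :=
    Finset.sum_le_sum fun ξ _ =>
      mul_le_mul_of_nonneg_left (hlogL₀ ξ) (hqpos ξ).le
  -- marginalization
  have hmarg : ∑ ξ : Fin N → Bool,
      q ξ * ∑ n, (if ξ n then ∫ θ, Real.log (a n θ) ∂μ else Real.log (b n))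
      = p * ∑ n, ∫ θ, Real.log (a n θ) ∂μ + (1 - p) * ∑ n, Real.log (b n) := by
    calc ∑ ξ : Fin N → Bool,
        q ξ * ∑ n, (if ξ n then ∫ θ, Real.log (a n θ) ∂μ else Real.log (b n))
        = ∑ ξ : Fin N → Bool,
            ∑ n, q ξ * (if ξ n then ∫ θ, Real.log (a n θ) ∂μ else Real.log (b n)) := by
          exact Finset.sum_congr rfl fun ξ _ => Finset.mul_sum _ _ _
      _ = ∑ n, ∑ ξ : Fin N → Bool,
            q ξ * (if ξ n then ∫ θ, Real.log (a n θ) ∂μ else Real.log (b n)) :=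
          Finset.sum_comm
      _ = ∑ n, (p * ∫ θ, Real.log (a n θ) ∂μ + (1 - p) * Real.log (b n)) := by
          refine Finset.sum_congr rfl fun n _ => ?_
          have := pfslda_marginal (N := N) p
            (fun c => if c then ∫ θ, Real.log (a n θ) ∂μ else Real.log (b n)) n
          norm_num at this ⊢
          rw [← this]
          exact Finset.sum_congr rfl fun ξ _ => by rw [hq ξ]
      _ = p * ∑ n, ∫ θ, Real.log (a n θ) ∂μ + (1 - p) * ∑ n, Real.log (b n) := by
          rw [Finset.sum_add_distrib, ← Finset.mul_sum, ← Finset.mul_sum]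
  -- assemble
  have hfinal : (∑ ξ : Fin N → Bool, q ξ * Real.log (r ξ)) +
      (p * ∑ n, ∫ θ, Real.log (a n θ) ∂μ + (1 - p) * ∑ n, Real.log (b n))
      ≤ Real.log (∑ ξ : Fin N → Bool, q ξ * r ξ * L₀ ξ) := by
    rw [← hmarg]
    calc (∑ ξ : Fin N → Bool, q ξ * Real.log (r ξ)) +
        ∑ ξ : Fin N → Bool,
          q ξ * ∑ n, (if ξ n then ∫ θ, Real.log (a n θ) ∂μ else Real.log (b n))
        ≤ (∑ ξ : Fin N → Bool, q ξ * Real.log (r ξ)) +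
            ∑ ξ : Fin N → Bool, q ξ * Real.log (L₀ ξ) := by linarith [hstep2]
      _ = ∑ ξ : Fin N → Bool, q ξ * Real.log (r ξ * L₀ ξ) := by
          rw [← Finset.sum_add_distrib]
          exact Finset.sum_congr rfl fun ξ _ => (hsplit ξ).symm
      _ ≤ Real.log (∑ ξ : Fin N → Bool, q ξ * (r ξ * L₀ ξ)) := hstep1
      _ = Real.log (∑ ξ : Fin N → Bool, q ξ * r ξ * L₀ ξ) := by rw [hsum_eq]
  linarith [hfinal]
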